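/- arXiv:math/0301254 — 6 statements merged into one kernel-verified Lean document; each statement's English description precedes it below -/
import Mathlib

section
/- Let n ≥ 3 and u : ℝⁿ → ℝ be continuous and positive. Suppose that for every x ∈ ℝⁿ and every λ > 0, the Kelvin transform inequality (λ/|y−x|)^{n−2} u(x + λ²(y−x)/|y−x|²) ≤ u(y) holds for all y with |y−x| ≥ λ. Then u is constant. -/
/-- If a positive continuous function on `ℝⁿ` (`n ≥ 3`) lies above all of its
Kelvin transforms `u_{x,λ}` outside the corresponding spheres, for every center
`x` and every radius `λ > 0`, then it is constant. -/
theorem stmt3 {n : ℕ} (hn : 3 ≤ n) (u : EuclideanSpace ℝ (Fin n) → ℝ)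
    (hc : Continuous u) (hpos : ∀ x, 0 < u x)
    (h : ∀ (x : EuclideanSpace ℝ (Fin n)) (l : ℝ), 0 < l →
      ∀ y : EuclideanSpace ℝ (Fin n), l ≤ ‖y - x‖ →
        (l / ‖y - x‖) ^ (n - 2) * u (x + (l ^ 2 / ‖y - x‖ ^ 2) • (y - x)) ≤ u y) :
    ∃ c : ℝ, ∀ x, u x = c := by
  suffices hle : ∀ a b, u a ≤ u b by
    exact ⟨u 0, fun x => le_antisymm (hle x 0) (hle 0 x)⟩
  intro a b
  rcases eq_or_ne a b with rfl | hab
  · exact le_refl _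
  set v := b - a with hv
  have hvpos : 0 < ‖v‖ := by
    simpa [hv] using (norm_pos_iff.mpr (sub_ne_zero.mpr hab.symm))
  have key : ∀ t : ℝ, 0 < t → (Real.sqrt (t / (1 + t))) ^ (n - 2) * u a ≤ u b := by
    intro t ht
    have h1t : (0 : ℝ) < 1 + t := by linarith
    set x := a - t • v with hx
    have hyx : b - x = (1 + t) • v := by
      rw [hx, hv]; module
    have hnorm : ‖b - x‖ = (1 + t) * ‖v‖ := by
      rw [hyx, norm_smul, Real.norm_eq_abs, abs_of_pos h1t]
    set l := Real.sqrt (t * (1 + t)) * ‖v‖ with hl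
    have hlpos : 0 < l := mul_pos (Real.sqrt_pos.mpr (mul_pos ht h1t)) hvpos
    have hle' : l ≤ ‖b - x‖ := by
      rw [hnorm, hl]
      have : Real.sqrt (t * (1 + t)) ≤ 1 + t := by
        calc Real.sqrt (t * (1 + t)) ≤ Real.sqrt ((1 + t) * (1 + t)) := by
              apply Real.sqrt_le_sqrt; nlinarith
          _ = 1 + t := Real.sqrt_mul_self h1t.le
      exact mul_le_mul_of_nonneg_right this (norm_nonneg _)
    have hkey := h x l hlpos b hle'
    have hsq : l ^ 2 = t * (1 + t) * ‖v‖ ^ 2 := by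
      rw [hl, mul_pow, Real.sq_sqrt (mul_pos ht h1t).le]
    have harg : x + (l ^ 2 / ‖b - x‖ ^ 2) • (b - x) = a := by
      rw [hnorm, hyx, hsq, smul_smul]
      have hcoef : t * (1 + t) * ‖v‖ ^ 2 / ((1 + t) * ‖v‖) ^ 2 * (1 + t) = t := by
        field_simp
      rw [hcoef, hx]
      module
    rw [harg, hnorm] at hkey
    have hco : l / ((1 + t) * ‖v‖) = Real.sqrt (t / (1 + t)) := by
      have hs1 : Real.sqrt (1 + t) ≠ 0 := by positivity
      rw [hl, Real.sqrt_mul ht.le, Real.sqrt_div ht.le]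
      rw [show (1 + t : ℝ) = Real.sqrt (1 + t) * Real.sqrt (1 + t) from
        (Real.mul_self_sqrt h1t.le).symm]
      field_simp
      rw [Real.sqrt_sq (Real.sqrt_nonneg _)]
    rw [hco] at hkey
    exact hkey
  have h0 : Filter.Tendsto (fun t : ℝ => t / (1 + t)) Filter.atTop (nhds 1) := by
    have h1 : Filter.Tendsto (fun t : ℝ => (1 + t)⁻¹) Filter.atTop (nhds 0) :=
      tendsto_inv_atTop_zero.comp (Filter.tendsto_atTop_add_const_left _ 1 Filter.tendsto_id)
    have h2 : Filter.Tendsto (fun t : ℝ => 1 - (1 + t)⁻¹) Filter.atTop (nhds 1) := by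
      simpa using (Filter.Tendsto.const_sub 1 h1)
    apply h2.congr'
    filter_upwards [Filter.eventually_gt_atTop (0 : ℝ)] with t ht
    have h1t : (1 + t : ℝ) ≠ 0 := by positivity
    field_simp
    ring
  have htend : Filter.Tendsto (fun t : ℝ => (Real.sqrt (t / (1 + t))) ^ (n - 2) * u a)
      Filter.atTop (nhds (u a)) := by
    have hs : Filter.Tendsto (fun t : ℝ => Real.sqrt (t / (1 + t))) Filter.atTop (nhds 1) := by
      have := (Real.continuous_sqrt.tendsto 1).comp h0
      simpa [Function.comp_def] using this
    have := (hs.pow (n - 2)).mul_const (u a)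
    simpa using this
  exact le_of_tendsto htend
    (Filter.eventually_atTop.mpr ⟨1, fun t ht => key t (by linarith)⟩)
end

section
/- Let n ≥ 3, u : ℝⁿ → ℝ be positive and C¹, and suppose liminf_{|y|→∞} |y|^{n−2} u(y) > 0. Then for every x ∈ ℝⁿ there exists λ₀(x) > 0 such that for all 0 < λ < λ₀(x) and all y with |y−x| ≥ λ, one has (λ/|y−x|)^{n−2} u(x + λ²(y−x)/|y−x|²) ≤ u(y). -/
open Filter

open Metric Set

set_option maxHeartbeats 2000000 in
/-- If `u > 0` is `C¹` on `ℝⁿ` (`n ≥ 3`) and `liminf_{|y|→∞} |y|^{n-2} u(y) > 0`,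
then the moving sphere method can be started at every center: for each `x` there
is `λ₀ > 0` such that `u_{x,λ} ≤ u` outside `B_λ(x)` for all `0 < λ < λ₀`. -/
theorem stmt4 {n : ℕ} (hn : 3 ≤ n) (u : EuclideanSpace ℝ (Fin n) → ℝ)
    (hu : ContDiff ℝ 1 u) (hpos : ∀ x, 0 < u x)
    (hinf : 0 < liminf (fun y : EuclideanSpace ℝ (Fin n) => ‖y‖ ^ (n - 2) * u y)
      (cocompact (EuclideanSpace ℝ (Fin n)))) :
    ∀ x : EuclideanSpace ℝ (Fin n), ∃ l₀ > (0 : ℝ), ∀ l : ℝ, 0 < l → l < l₀ →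
      ∀ y : EuclideanSpace ℝ (Fin n), l ≤ ‖y - x‖ →
        (l / ‖y - x‖) ^ (n - 2) * u (x + (l ^ 2 / ‖y - x‖ ^ 2) • (y - x)) ≤ u y := by
  intro x
  obtain ⟨k, hk⟩ : ∃ k, n - 2 = k + 1 := ⟨n - 3, by omega⟩
  have hballne : (closedBall x 1).Nonempty := ⟨x, mem_closedBall_self zero_le_one⟩
  -- minimum of u on ball of radius 1
  obtain ⟨a₁, ha₁, hmin₁⟩ := (isCompact_closedBall x 1).exists_isMinOn hballne
    hu.continuous.continuousOn
  set μ₁ := u a₁ with hμ₁def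
  have hμ₁pos : 0 < μ₁ := hpos a₁
  -- maximum of u on ball of radius 1
  obtain ⟨aM, haM, hmax⟩ := (isCompact_closedBall x 1).exists_isMaxOn hballne
    hu.continuous.continuousOn
  set M := u aM with hMdef
  have hMpos : 0 < M := hpos aM
  -- bound on the gradient on ball of radius 1
  obtain ⟨aK, haK, hKb⟩ := (isCompact_closedBall x 1).exists_isMaxOn hballne
    ((hu.continuous_fderiv one_ne_zero).norm.continuousOn)
  set K := ‖fderiv ℝ u aK‖ with hKdef
  have hK0 : 0 ≤ K := norm_nonneg _
  -- radius of monotonicity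
  set r₀ : ℝ := min 1 (((k : ℝ) + 1) * μ₁ / (2 * K + 2)) with hr₀def
  have hr₀pos : 0 < r₀ := lt_min one_pos (by positivity)
  have hr₀1 : r₀ ≤ 1 := min_le_left _ _
  have hr₀K : 2 * r₀ * K ≤ ((k : ℝ) + 1) * μ₁ := by
    have h1 : r₀ ≤ ((k : ℝ) + 1) * μ₁ / (2 * K + 2) := min_le_right _ _
    have h2 : (0 : ℝ) < 2 * K + 2 := by linarith
    have h3 : r₀ * (2 * K + 2) ≤ ((k : ℝ) + 1) * μ₁ := (le_div_iff₀ h2).mp h1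
    nlinarith [hr₀pos.le]
  -- monotonicity of r ↦ r^(n-2) * u(x + r θ)^2 on [0, r₀]
  have mono : ∀ θ : EuclideanSpace ℝ (Fin n), ‖θ‖ = 1 →
      MonotoneOn (fun r : ℝ => r ^ (n - 2) * u (x + r • θ) ^ 2) (Icc 0 r₀) := by
    intro θ hθ
    have hderiv : ∀ r : ℝ, HasDerivAt (fun r : ℝ => r ^ (n - 2) * u (x + r • θ) ^ 2)
        ((↑(n - 2) * r ^ (n - 2 - 1)) * u (x + r • θ) ^ 2
          + r ^ (n - 2) * ((2 : ℕ) * u (x + r • θ) ^ (2 - 1) * (fderiv ℝ u (x + r • θ)) θ)) r := by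
      intro r
      have hline : HasDerivAt (fun r : ℝ => x + r • θ) θ r := by
        simpa using ((hasDerivAt_id r).smul_const θ).const_add x
      have hφ : HasDerivAt (fun r : ℝ => u (x + r • θ)) ((fderiv ℝ u (x + r • θ)) θ) r :=
        ((hu.differentiable one_ne_zero _).hasFDerivAt.comp_hasDerivAt r hline)
      exact (hasDerivAt_pow (n - 2) r).mul (hφ.pow 2)
    apply monotoneOn_of_deriv_nonneg (convex_Icc _ _)
    · exact fun r _ => ((hderiv r).continuousAt).continuousWithinAt
    · exact fun r _ => ((hderiv r).differentiableAt).differentiableWithinAt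
    · intro r hr
      rw [interior_Icc] at hr
      rw [(hderiv r).deriv]
      have hrp : 0 < r := hr.1
      have hrr₀ : r ≤ r₀ := hr.2.le
      have hpmem : x + r • θ ∈ closedBall x 1 := by
        rw [mem_closedBall, dist_eq_norm]
        rw [add_sub_cancel_left, norm_smul, hθ]
        simp [abs_of_pos hrp]
        linarith
      set p := x + r • θ
      have hup : μ₁ ≤ u p := hmin₁ hpmem
      have hg' : |(fderiv ℝ u p) θ| ≤ K := by
        calc |(fderiv ℝ u p) θ| = ‖(fderiv ℝ u p) θ‖ := rfl
          _ ≤ ‖fderiv ℝ u p‖ * ‖θ‖ := (fderiv ℝ u p).le_opNorm θ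
          _ = ‖fderiv ℝ u p‖ := by rw [hθ, mul_one]
          _ ≤ K := hKb hpmem
      obtain ⟨hg1, hg2⟩ := abs_le.mp hg'
      have hup0 : 0 < u p := hpos p
      have h2ru : (0:ℝ) ≤ 2 * r * u p := mul_nonneg (by linarith) hup0.le
      have e1 : -(2 * r * u p * K) ≤ r * (2 * u p * (fderiv ℝ u p) θ) := by
        nlinarith [mul_le_mul_of_nonneg_left hg1 h2ru]
      have e2 : 2 * r * u p * K ≤ 2 * r₀ * u p * K := by
        nlinarith [mul_nonneg hup0.le hK0]
      have e3 : 2 * r₀ * K * u p ≤ ((k : ℝ) + 1) * μ₁ * u p :=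
        mul_le_mul_of_nonneg_right hr₀K hup0.le
      have e4 : ((k : ℝ) + 1) * μ₁ * u p ≤ ((k : ℝ) + 1) * u p ^ 2 := by
        nlinarith [mul_nonneg (mul_nonneg (show (0:ℝ) ≤ (k:ℝ) + 1 by positivity) hup0.le)
          (sub_nonneg.mpr hup)]
      have key : 0 ≤ ((k : ℝ) + 1) * u p ^ 2 + r * (2 * u p * (fderiv ℝ u p) θ) := by
        nlinarith [e1, e2, e3, e4]
      have hrw : (↑(n - 2) * r ^ (n - 2 - 1)) * u p ^ 2
          + r ^ (n - 2) * ((2 : ℕ) * u p ^ (2 - 1) * (fderiv ℝ u p) θ)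
          = r ^ k * (((k : ℝ) + 1) * u p ^ 2 + r * (2 * u p * (fderiv ℝ u p) θ)) := by
        rw [hk]
        push_cast
        ring
      rw [hrw]
      exact mul_nonneg (pow_nonneg hrp.le k) key
  -- decay estimate at infinity
  set m := liminf (fun y : EuclideanSpace ℝ (Fin n) => ‖y‖ ^ (n - 2) * u y)
      (cocompact (EuclideanSpace ℝ (Fin n))) with hmdef
  have hbd : IsBoundedUnder (· ≥ ·) (cocompact (EuclideanSpace ℝ (Fin n)))
      (fun y => ‖y‖ ^ (n - 2) * u y) :=
    isBoundedUnder_of ⟨0, fun y => mul_nonneg (by positivity) (hpos y).le⟩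
  have hev : ∀ᶠ y in cocompact (EuclideanSpace ℝ (Fin n)), m / 2 < ‖y‖ ^ (n - 2) * u y :=
    eventually_lt_of_lt_liminf (half_lt_self hinf) hbd
  obtain ⟨C, hCc, hCsub⟩ := mem_cocompact.mp hev
  obtain ⟨R, hR⟩ := hCc.isBounded.subset_closedBall 0
  set R₁ : ℝ := max R 0 + ‖x‖ + 1 with hR₁def
  have hR₁pos : 0 < R₁ := by positivity
  set c : ℝ := (m / 2) / 2 ^ (n - 2) with hcdef
  have hcpos : 0 < c := div_pos (half_pos hinf) (by positivity)
  have hdecay : ∀ y : EuclideanSpace ℝ (Fin n), R₁ ≤ ‖y - x‖ → c ≤ ‖y - x‖ ^ (n - 2) * u y := by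
    intro y hy
    have hd0 : (0:ℝ) < ‖y - x‖ := lt_of_lt_of_le hR₁pos hy
    have hxd : ‖x‖ ≤ ‖y - x‖ := by
      have : ‖x‖ ≤ R₁ := by rw [hR₁def]; linarith [le_max_right R (0:ℝ)]
      linarith
    have hyn : ‖y - x‖ - ‖x‖ ≤ ‖y‖ := by linarith [norm_sub_le y x]
    have hynot : y ∉ closedBall (0 : EuclideanSpace ℝ (Fin n)) R := by
      rw [mem_closedBall, dist_zero_right]
      push_neg
      have h3 : R < R₁ - ‖x‖ := by
        have : R ≤ max R 0 := le_max_left R 0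
        rw [hR₁def]; linarith
      linarith
    have hmem : m / 2 < ‖y‖ ^ (n - 2) * u y := hCsub (fun h => hynot (hR h))
    have h2d : ‖y‖ ≤ 2 * ‖y - x‖ := by
      have h := norm_add_le (y - x) x
      rw [sub_add_cancel] at h
      linarith
    have h3 : ‖y‖ ^ (n - 2) ≤ 2 ^ (n - 2) * ‖y - x‖ ^ (n - 2) := by
      rw [← mul_pow]
      exact pow_le_pow_left₀ (norm_nonneg _) h2d _
    have h4 : ‖y‖ ^ (n - 2) * u y ≤ 2 ^ (n - 2) * (‖y - x‖ ^ (n - 2) * u y) := by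
      rw [← mul_assoc]
      exact mul_le_mul_of_nonneg_right h3 (hpos y).le
    rw [hcdef, div_le_iff₀ (by positivity : (0:ℝ) < 2 ^ (n - 2))]
    calc m / 2 ≤ ‖y‖ ^ (n - 2) * u y := hmem.le
      _ ≤ 2 ^ (n - 2) * (‖y - x‖ ^ (n - 2) * u y) := h4
      _ = ‖y - x‖ ^ (n - 2) * u y * 2 ^ (n - 2) := by ring
  -- minimum of u on ball of radius R₁
  obtain ⟨aμ, haμ, hminμ⟩ := (isCompact_closedBall x R₁).exists_isMinOn
    ⟨x, mem_closedBall_self hR₁pos.le⟩ hu.continuous.continuousOn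
  set μ := u aμ with hμdef
  have hμpos : 0 < μ := hpos aμ
  -- choice of λ₀
  set t : ℝ := min 1 (μ / M) with htdef
  have htpos : 0 < t := lt_min one_pos (by positivity)
  have ht1 : t ≤ 1 := min_le_left _ _
  set s₁ : ℝ := min 1 (c / M) with hs₁def
  have hs₁pos : 0 < s₁ := lt_min one_pos (by positivity)
  have hs₁1 : s₁ ≤ 1 := min_le_left _ _
  refine ⟨min r₀ (min (r₀ * t) s₁), lt_min hr₀pos (lt_min (by positivity) hs₁pos), ?_⟩
  intro l hl hll₀ y hly
  have hlr₀ : l < r₀ := hll₀.trans_le (min_le_left _ _)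
  have hlt : l < r₀ * t := hll₀.trans_le ((min_le_right _ _).trans (min_le_left _ _))
  have hls : l < s₁ := hll₀.trans_le ((min_le_right _ _).trans (min_le_right _ _))
  set d := ‖y - x‖ with hddef
  have hd0 : 0 < d := lt_of_lt_of_le hl hly
  set a := x + (l ^ 2 / ‖y - x‖ ^ 2) • (y - x) with hadef
  have ha : a ∈ closedBall x 1 := by
    rw [mem_closedBall, dist_eq_norm, hadef, add_sub_cancel_left, norm_smul, Real.norm_eq_abs]
    have : |l ^ 2 / ‖y - x‖ ^ 2| = l ^ 2 / d ^ 2 := abs_of_pos (by positivity)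
    rw [this]
    have h1 : l ^ 2 / d ^ 2 * d = l ^ 2 / d := by field_simp
    rw [← hddef, h1]
    have h2 : l ^ 2 / d ≤ l := by
      rw [div_le_iff₀ hd0]; nlinarith
    linarith
  have hua : u a ≤ M := hmax ha
  have hne : (0:ℕ) ≠ 2 := by norm_num
  -- reduce to product form
  rw [div_pow, div_mul_eq_mul_div, div_le_iff₀ (by positivity : (0:ℝ) < ‖y - x‖ ^ (n - 2))]
  rw [← hddef]
  rcases le_or_gt d r₀ with hcase | hcase
  · -- inner region: use monotonicity
    set θ := d⁻¹ • (y - x) with hθdef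
    have hθn : ‖θ‖ = 1 := by
      rw [hθdef, norm_smul, Real.norm_eq_abs, abs_of_pos (inv_pos.mpr hd0), ← hddef, inv_mul_cancel₀ hd0.ne']
    set s := l ^ 2 / d with hsdef
    have hs0 : 0 < s := by positivity
    have hsl : s ≤ l := by rw [hsdef, div_le_iff₀ hd0]; nlinarith
    have hsd : s ≤ d := hsl.trans hly
    have hxsθ : x + s • θ = a := by
      rw [hθdef, hadef, smul_smul]
      congr 2
      rw [hsdef, ← hddef]
      field_simp
    have hxdθ : x + d • θ = y := by
      rw [hθdef, smul_smul, mul_inv_cancel₀ hd0.ne', one_smul]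
      abel
    have hmono := mono θ hθn ⟨hs0.le, hsl.trans hlr₀.le⟩ ⟨hd0.le, hcase⟩ hsd
    simp only [hxsθ, hxdθ] at hmono
    -- hmono : s ^ (n-2) * u a ^ 2 ≤ d ^ (n-2) * u y ^ 2
    have hsq : (l ^ (n - 2) * u a) ^ 2 ≤ (u y * d ^ (n - 2)) ^ 2 := by
      have hsd' : s * d = l ^ 2 := by rw [hsdef]; field_simp
      calc (l ^ (n - 2) * u a) ^ 2 = (l ^ 2) ^ (n - 2) * u a ^ 2 := by
            rw [mul_pow, ← pow_mul, mul_comm (n - 2) 2, pow_mul]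
        _ = (s * d) ^ (n - 2) * u a ^ 2 := by rw [hsd']
        _ = (s ^ (n - 2) * u a ^ 2) * d ^ (n - 2) := by rw [mul_pow]; ring
        _ ≤ (d ^ (n - 2) * u y ^ 2) * d ^ (n - 2) :=
            mul_le_mul_of_nonneg_right hmono (pow_nonneg hd0.le _)
        _ = (u y * d ^ (n - 2)) ^ 2 := by ring
    exact (pow_le_pow_iff_left₀ (mul_nonneg (by positivity) (hpos a).le)
      (mul_nonneg (hpos y).le (by positivity)) two_ne_zero).mp hsq
  · -- outer region
    have hlk : l ^ (n - 2) * u a ≤ l ^ (n - 2) * M :=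
      mul_le_mul_of_nonneg_left hua (by positivity)
    rcases le_or_gt d R₁ with hcase2 | hcase2
    · -- middle annulus
      have huy : μ ≤ u y := hminμ (by rw [mem_closedBall, dist_eq_norm]; exact hcase2)
      have h2 : l ^ (n - 2) ≤ (r₀ * t) ^ (n - 2) := pow_le_pow_left₀ hl.le hlt.le _
      have h4 : t ^ (n - 2) ≤ t := by
        have := pow_le_pow_of_le_one htpos.le ht1 (show 1 ≤ n - 2 by omega)
        simpa using this
      have h6 : t ^ (n - 2) * M ≤ μ := by
        calc t ^ (n - 2) * M ≤ (μ / M) * M :=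
              mul_le_mul_of_nonneg_right (h4.trans (min_le_right _ _)) hMpos.le
          _ = μ := div_mul_cancel₀ _ hMpos.ne'
      have h7 : r₀ ^ (n - 2) ≤ d ^ (n - 2) := pow_le_pow_left₀ hr₀pos.le hcase.le _
      calc l ^ (n - 2) * u a ≤ l ^ (n - 2) * M := hlk
        _ ≤ (r₀ * t) ^ (n - 2) * M := mul_le_mul_of_nonneg_right h2 hMpos.le
        _ = r₀ ^ (n - 2) * (t ^ (n - 2) * M) := by rw [mul_pow]; ring
        _ ≤ r₀ ^ (n - 2) * μ := mul_le_mul_of_nonneg_left h6 (by positivity)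
        _ ≤ d ^ (n - 2) * u y := mul_le_mul h7 huy hμpos.le (by positivity)
        _ = u y * d ^ (n - 2) := by ring
    · -- far region: use decay
      have hdec := hdecay y (by rw [← hddef]; exact hcase2.le)
      rw [← hddef] at hdec
      have h2 : l ^ (n - 2) ≤ s₁ ^ (n - 2) := pow_le_pow_left₀ hl.le hls.le _
      have h4 : s₁ ^ (n - 2) ≤ s₁ := by
        have := pow_le_pow_of_le_one hs₁pos.le hs₁1 (show 1 ≤ n - 2 by omega)
        simpa using this
      have h6 : s₁ ^ (n - 2) * M ≤ c := by
        calc s₁ ^ (n - 2) * M ≤ (c / M) * M :=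
              mul_le_mul_of_nonneg_right (h4.trans (min_le_right _ _)) hMpos.le
          _ = c := div_mul_cancel₀ _ hMpos.ne'
      calc l ^ (n - 2) * u a ≤ l ^ (n - 2) * M := hlk
        _ ≤ s₁ ^ (n - 2) * M := mul_le_mul_of_nonneg_right h2 hMpos.le
        _ ≤ c := h6
        _ ≤ d ^ (n - 2) * u y := hdec
        _ = u y * d ^ (n - 2) := by ring
end

section
/- Let n ≥ 3, u : ℝⁿ → ℝ positive and continuous, x ∈ ℝⁿ, and μ > 0. Suppose u_{x,λ}(y) ≤ u(y) for all |y−x| ≥ λ and all 0 < λ < μ, where u_{x,λ}(y) = (λ/|y−x|)^{n−2} u(x + λ²(y−x)/|y−x|²). If α := liminf_{|y|→∞} |y|^{n−2} u(y) is finite, then μ^{n−2} u(x) ≤ α. -/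
open Filter

/-- If the moving sphere inequality `u_{x,λ} ≤ u` outside `B_λ(x)` holds for all
radii `0 < λ < μ`, and `α = liminf_{|y|→∞} |y|^{n-2} u(y)` is finite, then
`μ^{n-2} u(x) ≤ α`. (Liminf taken in `EReal` to express finiteness.) -/
theorem stmt5 {n : ℕ} (hn : 3 ≤ n) (u : EuclideanSpace ℝ (Fin n) → ℝ)
    (hc : Continuous u) (hpos : ∀ x, 0 < u x)
    (x : EuclideanSpace ℝ (Fin n)) (μ : ℝ) (hμ : 0 < μ)
    (h : ∀ l : ℝ, 0 < l → l < μ →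
      ∀ y : EuclideanSpace ℝ (Fin n), l ≤ ‖y - x‖ →
        (l / ‖y - x‖) ^ (n - 2) * u (x + (l ^ 2 / ‖y - x‖ ^ 2) • (y - x)) ≤ u y)
    (hfin : liminf (fun y : EuclideanSpace ℝ (Fin n) =>
        ((‖y‖ ^ (n - 2) * u y : ℝ) : EReal)) (cocompact (EuclideanSpace ℝ (Fin n))) ≠ ⊤) :
    ((μ ^ (n - 2) * u x : ℝ) : EReal) ≤
      liminf (fun y : EuclideanSpace ℝ (Fin n) =>
        ((‖y‖ ^ (n - 2) * u y : ℝ) : EReal)) (cocompact (EuclideanSpace ℝ (Fin n))) := by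
  haveI : Nonempty (Fin n) := ⟨⟨0, by omega⟩⟩
  let E := EuclideanSpace ℝ (Fin n)
  set α := liminf (fun y : E => ((‖y‖ ^ (n - 2) * u y : ℝ) : EReal)) (cocompact E) with hα
  -- the norm of y - x tends to infinity along cocompact
  have A : Tendsto (fun y : E => ‖y - x‖) (cocompact E) atTop := by
    apply tendsto_atTop_mono (fun y => norm_sub_norm_le y x)
    exact tendsto_atTop_add_const_right _ (-‖x‖) tendsto_norm_cocompact_atTop
  -- ‖y‖ / ‖y - x‖ → 1
  have B : Tendsto (fun y : E => ‖y‖ / ‖y - x‖) (cocompact E) (nhds 1) := by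
    have h0 : Tendsto (fun y : E => (‖y‖ - ‖y - x‖) / ‖y - x‖) (cocompact E) (nhds 0) := by
      apply squeeze_zero_norm' (a := fun y : E => ‖x‖ / ‖y - x‖)
      · filter_upwards [A.eventually_ge_atTop 1] with y hy
        have hy0 : (0 : ℝ) < ‖y - x‖ := lt_of_lt_of_le one_pos hy
        have hnum : |‖y‖ - ‖y - x‖| ≤ ‖x‖ := by
          simpa using abs_norm_sub_norm_le y (y - x)
        calc ‖(‖y‖ - ‖y - x‖) / ‖y - x‖‖ = |‖y‖ - ‖y - x‖| / ‖y - x‖ := by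
              rw [Real.norm_eq_abs, abs_div, abs_norm]
          _ ≤ ‖x‖ / ‖y - x‖ := by gcongr
      · exact tendsto_const_nhds.div_atTop A
    have h1 := h0.const_add 1
    rw [add_zero] at h1
    apply h1.congr'
    filter_upwards [A.eventually_ge_atTop 1] with y hy
    have hy0 : (‖y - x‖ : ℝ) ≠ 0 := by positivity
    field_simp
    ring
  -- the argument tends to x
  have C : ∀ l : ℝ, Tendsto (fun y : E => x + (l ^ 2 / ‖y - x‖ ^ 2) • (y - x))
      (cocompact E) (nhds x) := by
    intro l
    have h0 : Tendsto (fun y : E => (l ^ 2 / ‖y - x‖ ^ 2) • (y - x)) (cocompact E)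
        (nhds 0) := by
      apply squeeze_zero_norm' (a := fun y : E => l ^ 2 / ‖y - x‖)
      · filter_upwards [A.eventually_ge_atTop 1] with y hy
        have hy0 : (0 : ℝ) < ‖y - x‖ := lt_of_lt_of_le one_pos hy
        rw [norm_smul, Real.norm_eq_abs, abs_of_nonneg (by positivity)]
        apply le_of_eq
        field_simp
      · exact tendsto_const_nhds.div_atTop A
    have := (tendsto_const_nhds : Tendsto (fun _ : E => x) (cocompact E) (nhds x)).add h0
    simpa using this
  -- main estimate for each l < μ
  have key : ∀ l : ℝ, 0 < l → l < μ → ((l ^ (n - 2) * u x : ℝ) : EReal) ≤ α := by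
    intro l hl hlμ
    set g : E → ℝ := fun y =>
      (‖y‖ / ‖y - x‖ * l) ^ (n - 2) * u (x + (l ^ 2 / ‖y - x‖ ^ 2) • (y - x)) with hg
    have hgt : Tendsto g (cocompact E) (nhds (l ^ (n - 2) * u x)) := by
      have h1 : Tendsto (fun y : E => ‖y‖ / ‖y - x‖ * l) (cocompact E) (nhds l) := by
        simpa using B.mul_const l
      have h2 := (hc.tendsto x).comp (C l)
      have := (h1.pow (n - 2)).mul h2
      simpa [hg, one_pow] using this
    have hglim : liminf (fun y : E => ((g y : ℝ) : EReal)) (cocompact E)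
        = ((l ^ (n - 2) * u x : ℝ) : EReal) := by
      have : Tendsto (fun y : E => ((g y : ℝ) : EReal)) (cocompact E)
          (nhds ((l ^ (n - 2) * u x : ℝ) : EReal)) := EReal.tendsto_coe.mpr hgt
      exact this.liminf_eq
    rw [← hglim, hα]
    refine liminf_le_liminf ?_ (by isBoundedDefault) (by isBoundedDefault)
    filter_upwards [A.eventually_ge_atTop l] with y hy
    have hy0 : (0 : ℝ) < ‖y - x‖ := lt_of_lt_of_le hl hy
    rw [EReal.coe_le_coe_iff]
    have hineq := h l hl hlμ y hy
    calc g y = ‖y‖ ^ (n - 2) *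
          ((l / ‖y - x‖) ^ (n - 2) * u (x + (l ^ 2 / ‖y - x‖ ^ 2) • (y - x))) := by
          rw [hg, ← mul_assoc, ← mul_pow]
          ring_nf
      _ ≤ ‖y‖ ^ (n - 2) * u y := by
          apply mul_le_mul_of_nonneg_left hineq (by positivity)
  -- take the limit l → μ⁻
  have hne : (nhdsWithin μ (Set.Iio μ)).NeBot := nhdsLT_neBot μ
  have hlim : Tendsto (fun l : ℝ => ((l ^ (n - 2) * u x : ℝ) : EReal))
      (nhdsWithin μ (Set.Iio μ)) (nhds ((μ ^ (n - 2) * u x : ℝ) : EReal)) := by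
    apply EReal.tendsto_coe.mpr
    apply Tendsto.mono_left _ nhdsWithin_le_nhds
    exact ((continuous_pow (n - 2)).mul continuous_const).tendsto μ
  apply le_of_tendsto hlim
  filter_upwards [Ioo_mem_nhdsLT_of_mem (Set.mem_Ioc.mpr ⟨hμ, le_refl μ⟩)] with l hl
  exact key l hl.1 hl.2
end

section
/- Let n ≥ 3, a, b > 0, x̄ ∈ ℝⁿ, and define u(x) = (a / (1 + b²|x−x̄|²))^{(n−2)/2}. Then the conformal Schouten-type tensor A^u := −(2/(n−2)) u^{−(n+2)/(n−2)} ∇²u + (2n/(n−2)²) u^{−2n/(n−2)} ∇u ⊗ ∇u − (2/(n−2)²) u^{−2n/(n−2)} |∇u|² I is constant on ℝⁿ and equals 2b²a^{−2} I. -/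
open Filter Metric Matrix
open scoped RealInnerProductSpace

section auxlemmas
variable {n : ℕ}

lemma sqnorm_hasFDerivAt (xbar x : EuclideanSpace ℝ (Fin n)) :
    HasFDerivAt (fun z : EuclideanSpace ℝ (Fin n) => ‖z - xbar‖^2)
      ((2:ℝ) • (innerSL ℝ (x - xbar))) x := by
  have h : (fun z : EuclideanSpace ℝ (Fin n) => ‖z - xbar‖^2)
      = fun z => ⟪z - xbar, z - xbar⟫ := by
    funext z; rw [real_inner_self_eq_norm_sq]
  rw [h]
  have hd : HasFDerivAt (fun z : EuclideanSpace ℝ (Fin n) => z - xbar)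
      (ContinuousLinearMap.id ℝ _) x := (hasFDerivAt_id x).sub_const xbar
  have := hd.inner ℝ hd
  refine this.congr_fderiv ?_
  ext v
  simp [fderivInnerCLM_apply, two_smul, sub_mul, Finset.sum_sub_distrib, mul_comm, mul_sub]
  rw [real_inner_comm (x - xbar) v, inner_sub_left]

lemma aux_hasFDerivAt (b c p : ℝ) (xbar x : EuclideanSpace ℝ (Fin n)) :
    HasFDerivAt (fun z : EuclideanSpace ℝ (Fin n) => c * (1 + b^2 * ‖z - xbar‖^2) ^ p)
      ((c * p * (1 + b^2 * ‖x - xbar‖^2) ^ (p-1) * (2*b^2)) • (innerSL ℝ (x - xbar))) x := by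
  have hw0 : (0:ℝ) < 1 + b^2 * ‖x - xbar‖^2 := by positivity
  have h1 : HasFDerivAt (fun z : EuclideanSpace ℝ (Fin n) => 1 + b^2 * ‖z - xbar‖^2)
      ((b^2) • ((2:ℝ) • innerSL ℝ (x - xbar))) x :=
    ((sqnorm_hasFDerivAt xbar x).const_mul (b^2)).const_add 1
  have h2 := (h1.rpow_const (p := p) (Or.inl hw0.ne')).const_mul c
  refine h2.congr_fderiv ?_
  ext v
  simp only [ContinuousLinearMap.coe_smul', Pi.smul_apply, smul_eq_mul]
  ring

lemma aux_apply (b c p : ℝ) (xbar x : EuclideanSpace ℝ (Fin n)) (i : Fin n) :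
    fderiv ℝ (fun z : EuclideanSpace ℝ (Fin n) => c * (1 + b^2 * ‖z - xbar‖^2) ^ p) x
      (EuclideanSpace.single i 1)
    = (c * p * (1 + b^2 * ‖x - xbar‖^2) ^ (p-1) * (2*b^2)) * (x i - xbar i) := by
  rw [(aux_hasFDerivAt b c p xbar x).fderiv]
  simp [real_inner_comm, EuclideanSpace.inner_single_right]

lemma hess_aux (b c p : ℝ) (xbar x : EuclideanSpace ℝ (Fin n)) (i j : Fin n) :
    fderiv ℝ (fun z : EuclideanSpace ℝ (Fin n) =>
        (c * (1 + b^2 * ‖z - xbar‖^2) ^ p) * (z j - xbar j)) x (EuclideanSpace.single i 1)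
    = (c * p * (1 + b^2 * ‖x - xbar‖^2) ^ (p-1) * (2*b^2)) * (x i - xbar i) * (x j - xbar j)
      + (c * (1 + b^2 * ‖x - xbar‖^2) ^ p) * (if i = j then 1 else 0) := by
  have hd : HasFDerivAt (fun z : EuclideanSpace ℝ (Fin n) => z j - xbar j)
      (EuclideanSpace.proj (𝕜 := ℝ) j) x :=
    ((EuclideanSpace.proj (𝕜 := ℝ) j).hasFDerivAt (x := x)).sub_const (xbar j)
  have h := ((aux_hasFDerivAt b c p xbar x).mul hd).fderiv
  simp only [Pi.mul_def] at h
  rw [h]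
  simp [real_inner_comm, EuclideanSpace.single_apply, smul_eq_mul, EuclideanSpace.inner_single_right]
  rcases eq_or_ne i j with rfl | hij
  · simp; ring
  · simp [hij, Ne.symm hij]; ring

end auxlemmas


/-- Gradient of `u` as a vector of partial derivatives. -/
noncomputable def gradv {n : ℕ} (u : EuclideanSpace ℝ (Fin n) → ℝ)
    (x : EuclideanSpace ℝ (Fin n)) : Fin n → ℝ :=
  fun i => fderiv ℝ u x (EuclideanSpace.single i 1)

/-- Hessian matrix of `u`. -/
noncomputable def hess {n : ℕ} (u : EuclideanSpace ℝ (Fin n) → ℝ)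
    (x : EuclideanSpace ℝ (Fin n)) : Matrix (Fin n) (Fin n) ℝ :=
  Matrix.of fun i j =>
    fderiv ℝ (fun z => fderiv ℝ u z (EuclideanSpace.single j 1)) x
      (EuclideanSpace.single i 1)

/-- The conformal Schouten-type tensor
`A^u = -(2/(n-2)) u^{-(n+2)/(n-2)} ∇²u + (2n/(n-2)²) u^{-2n/(n-2)} ∇u⊗∇u
 - (2/(n-2)²) u^{-2n/(n-2)} |∇u|² I`. -/
noncomputable def Amat {n : ℕ} (u : EuclideanSpace ℝ (Fin n) → ℝ)
    (x : EuclideanSpace ℝ (Fin n)) : Matrix (Fin n) (Fin n) ℝ :=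
  (-(2 / ((n : ℝ) - 2)) * u x ^ (-(((n : ℝ) + 2) / ((n : ℝ) - 2)))) • hess u x
    + ((2 * (n : ℝ) / ((n : ℝ) - 2) ^ 2) * u x ^ (-(2 * (n : ℝ) / ((n : ℝ) - 2)))) •
        Matrix.vecMulVec (gradv u x) (gradv u x)
    - ((2 / ((n : ℝ) - 2) ^ 2) * u x ^ (-(2 * (n : ℝ) / ((n : ℝ) - 2))) *
        (∑ i, gradv u x i ^ 2)) • (1 : Matrix (Fin n) (Fin n) ℝ)

/-- For the standard bubble `u(x) = (a/(1+b²|x-x̄|²))^{(n-2)/2}`, the tensor `A^u`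
is constant, equal to `2b²a⁻² I`. -/
theorem stmt6 {n : ℕ} (hn : 3 ≤ n) (a b : ℝ) (ha : 0 < a) (hb : 0 < b)
    (xbar : EuclideanSpace ℝ (Fin n))
    (u : EuclideanSpace ℝ (Fin n) → ℝ)
    (hu : ∀ x, u x = (a / (1 + b ^ 2 * ‖x - xbar‖ ^ 2)) ^ (((n : ℝ) - 2) / 2)) :
    ∀ x, Amat u x = (2 * b ^ 2 / a ^ 2) • (1 : Matrix (Fin n) (Fin n) ℝ) := by
  have h3 : (3:ℝ) ≤ (n:ℝ) := by exact_mod_cast hn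
  have hne : (n:ℝ) - 2 ≠ 0 := by intro h; nlinarith
  have hw0 : ∀ z : EuclideanSpace ℝ (Fin n), (0:ℝ) < 1 + b^2 * ‖z - xbar‖^2 :=
    fun z => by positivity
  set m : ℝ := ((n:ℝ) - 2)/2 with hm
  have hu' : u = fun z => a ^ m * (1 + b ^ 2 * ‖z - xbar‖ ^ 2) ^ (-m) := by
    funext z
    rw [hu z, Real.div_rpow ha.le (hw0 z).le, Real.rpow_neg (hw0 z).le, div_eq_mul_inv]
  subst hu'
  intro x
  have hwp : (0:ℝ) < 1 + b^2 * ‖x - xbar‖^2 := hw0 x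
  have hgrad : ∀ (z : EuclideanSpace ℝ (Fin n)) i,
      gradv (fun z => a ^ m * (1 + b ^ 2 * ‖z - xbar‖ ^ 2) ^ (-m)) z i
      = (a ^ m * (-m) * (1 + b ^ 2 * ‖z - xbar‖ ^ 2) ^ (-m - 1) * (2 * b ^ 2))
          * (z i - xbar i) := by
    intro z i
    simp only [gradv]
    exact aux_apply b (a ^ m) (-m) xbar z i
  have hhess : ∀ i j, hess (fun z => a ^ m * (1 + b ^ 2 * ‖z - xbar‖ ^ 2) ^ (-m)) x i j
      = ((a ^ m * (-m) * (2*b^2)) * (-m-1) * (1 + b^2*‖x - xbar‖^2) ^ (-m-1-1) * (2*b^2))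
          * (x i - xbar i) * (x j - xbar j)
        + ((a ^ m * (-m) * (2*b^2)) * (1 + b^2*‖x - xbar‖^2) ^ (-m-1))
          * (if i = j then 1 else 0) := by
    intro i j
    have hfun : (fun z => fderiv ℝ (fun z => a ^ m * (1 + b ^ 2 * ‖z - xbar‖ ^ 2) ^ (-m)) z
          (EuclideanSpace.single j 1))
        = fun z => ((a ^ m * (-m) * (2*b^2)) * (1 + b^2*‖z - xbar‖^2) ^ (-m-1))
            * (z j - xbar j) := by
      funext z
      rw [aux_apply b (a ^ m) (-m) xbar z j]
      ring
    simp only [hess, Matrix.of_apply]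
    rw [hfun, hess_aux b (a ^ m * (-m) * (2*b^2)) (-m-1) xbar x i j]
  -- power identities
  have hPp : (0:ℝ) < a ^ m := Real.rpow_pos_of_pos ha m
  have hQp : (0:ℝ) < (1 + b^2*‖x - xbar‖^2) ^ (-m-1) := Real.rpow_pos_of_pos hwp _
  have Hsplit : ∀ e : ℝ, (a ^ m * (1 + b^2*‖x - xbar‖^2) ^ (-m)) ^ e
      = a ^ (m*e) * (1 + b^2*‖x - xbar‖^2) ^ (-(m*e)) := by
    intro e
    rw [Real.mul_rpow hPp.le (Real.rpow_pos_of_pos hwp _).le,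
      ← Real.rpow_mul ha.le, ← Real.rpow_mul hwp.le, neg_mul]
  have H1 : (a ^ m * (1 + b^2*‖x - xbar‖^2) ^ (-m)) ^ (-(((n:ℝ)+2)/((n:ℝ)-2)))
      = (1 + b^2*‖x - xbar‖^2)
        / (a^2 * a ^ m * (1 + b^2*‖x - xbar‖^2) ^ (-m-1)) := by
    rw [Hsplit]
    rw [show m * (-(((n:ℝ)+2)/((n:ℝ)-2))) = -(2 + m) from by rw [hm]; field_simp; ring]
    rw [show (-(-(2 + m)) : ℝ) = (-(-m-1)) + 1 from by ring]
    rw [Real.rpow_neg ha.le, Real.rpow_add hwp, Real.rpow_one,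
      Real.rpow_add ha, Real.rpow_two, Real.rpow_neg hwp.le]
    field_simp
  have H2 : (a ^ m * (1 + b^2*‖x - xbar‖^2) ^ (-m)) ^ (-(2*(n:ℝ)/((n:ℝ)-2)))
      = 1 / (a^2 * (a ^ m * (1 + b^2*‖x - xbar‖^2) ^ (-m-1))^2) := by
    rw [Hsplit]
    rw [show m * (-(2*(n:ℝ)/((n:ℝ)-2))) = -(2 + (m + m)) from by rw [hm]; field_simp; ring]
    rw [show (-(-(2 + (m + m))) : ℝ) = (-(-m-1)) + (-(-m-1)) from by ring]
    rw [Real.rpow_neg ha.le, Real.rpow_add hwp,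
      Real.rpow_add ha, Real.rpow_add ha, Real.rpow_two, Real.rpow_neg hwp.le]
    field_simp
  have hq2 : (1 + b^2*‖x - xbar‖^2) ^ (-m-1-1)
      = (1 + b^2*‖x - xbar‖^2) ^ (-m-1) / (1 + b^2*‖x - xbar‖^2) := by
    rw [show (-m-1-1 : ℝ) = (-m-1) + (-1) from by ring, Real.rpow_add hwp,
      Real.rpow_neg_one, div_eq_mul_inv]
  have hnorm : ‖x - xbar‖^2 = ∑ k, (x k - xbar k)^2 := by
    rw [EuclideanSpace.norm_eq, Real.sq_sqrt (by positivity)]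
    congr 1
    funext k
    simp [sq_abs]
  ext i j
  simp only [Amat, Matrix.add_apply, Matrix.sub_apply, Matrix.smul_apply,
    Matrix.vecMulVec_apply, Matrix.one_apply, smul_eq_mul, hhess, hgrad,
    H1, H2, hq2]
  rw [show (∑ k, ((a ^ m * (-m) * (1 + b ^ 2 * ‖x - xbar‖ ^ 2) ^ (-m - 1) * (2 * b ^ 2))
        * (x k - xbar k))^2)
      = (a ^ m * (-m) * (1 + b ^ 2 * ‖x - xbar‖ ^ 2) ^ (-m - 1) * (2 * b ^ 2))^2
        * ∑ k, (x k - xbar k)^2 from by rw [Finset.mul_sum]; congr 1; funext k; ring]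
  rw [hm]
  rcases eq_or_ne i j with rfl | hij
  · simp only [if_pos rfl, hnorm]
    field_simp
    ring
  · simp only [if_neg hij]
    field_simp
    ring
end

section
/- Let n ≥ 3, α > 0, and suppose u : ℝⁿ → ℝ is positive and C¹ such that the vector field V(x) := (n−2) α x + α^{n/(n−2)} u(x)^{n/(2−n)} ∇u(x) is constant on ℝⁿ. Then there exist x̄ ∈ ℝⁿ and d > 0 such that u(x) = (α^{2/(n−2)} / (d + |x−x̄|²))^{(n−2)/2} for all x ∈ ℝⁿ. -/
open InnerProductSpace

/-- If `u > 0` is `C¹` on `ℝⁿ` and the vector field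
`V(x) = (n-2) α x + α^{n/(n-2)} u(x)^{n/(2-n)} ∇u(x)` is constant, then `u` is a
standard bubble: `u(x) = (α^{2/(n-2)}/(d+|x-x̄|²))^{(n-2)/2}` with `d > 0`. -/
theorem stmt7 {n : ℕ} (hn : 3 ≤ n) (α : ℝ) (hα : 0 < α)
    (u : EuclideanSpace ℝ (Fin n) → ℝ)
    (hu : ContDiff ℝ 1 u) (hpos : ∀ x, 0 < u x)
    (hV : ∀ x y : EuclideanSpace ℝ (Fin n),
      (((n : ℝ) - 2) * α) • x +
        (α ^ ((n : ℝ) / ((n : ℝ) - 2)) * u x ^ ((n : ℝ) / (2 - (n : ℝ)))) • gradient u x =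
      (((n : ℝ) - 2) * α) • y +
        (α ^ ((n : ℝ) / ((n : ℝ) - 2)) * u y ^ ((n : ℝ) / (2 - (n : ℝ)))) • gradient u y) :
    ∃ (xbar : EuclideanSpace ℝ (Fin n)) (d : ℝ), 0 < d ∧
      ∀ x, u x = (α ^ (2 / ((n : ℝ) - 2)) / (d + ‖x - xbar‖ ^ 2)) ^ (((n : ℝ) - 2) / 2) := by
  have hn2 : (0:ℝ) < (n:ℝ) - 2 := by
    have : (3:ℝ) ≤ n := by exact_mod_cast hn
    linarith
  have h2n : (2:ℝ) - n ≠ 0 := by linarith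
  set q : ℝ := (n:ℝ) / ((n:ℝ) - 2) with hq
  set p : ℝ := 2 / (2 - (n:ℝ)) with hp
  have hp1 : p - 1 = (n:ℝ) / (2 - (n:ℝ)) := by
    rw [hp, div_sub_one h2n]; congr 1; ring
  have hαq : (0:ℝ) < α ^ q := Real.rpow_pos_of_pos hα q
  set β : ℝ := α ^ ((1:ℝ) - q) with hβ
  have hβpos : 0 < β := Real.rpow_pos_of_pos hα _
  set c : EuclideanSpace ℝ (Fin n) := (((n : ℝ) - 2) * α) • (0:EuclideanSpace ℝ (Fin n)) +
      (α ^ q * u 0 ^ ((n : ℝ) / (2 - (n : ℝ)))) • gradient u 0 with hc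
  have hna : ((n:ℝ) - 2) * α ≠ 0 := by positivity
  set xbar : EuclideanSpace ℝ (Fin n) := ((((n:ℝ) - 2) * α)⁻¹) • c with hxbar
  have hcx : c = (((n:ℝ) - 2) * α) • xbar := by
    rw [hxbar, smul_inv_smul₀ hna]
  set w : EuclideanSpace ℝ (Fin n) → ℝ := fun x => u x ^ p with hw
  set F : EuclideanSpace ℝ (Fin n) → ℝ := fun x => w x - β * ⟪x - xbar, x - xbar⟫_ℝ with hF
  -- derivative of F is zero everywhere
  have hFderiv : ∀ x, HasFDerivAt F (0 : EuclideanSpace ℝ (Fin n) →L[ℝ] ℝ) x := by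
    intro x
    have hux : DifferentiableAt ℝ u x := (hu.differentiable one_ne_zero).differentiableAt
    have hgrad : HasGradientAt u (gradient u x) x := hux.hasGradientAt
    have hrpow : HasDerivAt (fun t : ℝ => t ^ p) (p * u x ^ (p - 1)) (u x) :=
      Real.hasDerivAt_rpow_const (Or.inl (hpos x).ne')
    have hwD : HasFDerivAt w ((p * u x ^ (p - 1)) • (toDual ℝ (EuclideanSpace ℝ (Fin n)) (gradient u x))) x :=
      hrpow.comp_hasFDerivAt x hgrad.hasFDerivAt
    -- use hV to identify the gradient term
    have key : (α ^ q * u x ^ (p - 1)) • gradient u x = c - (((n:ℝ) - 2) * α) • x := by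
      have := hV x 0
      rw [hp1]
      rw [← hc] at this
      rw [eq_sub_iff_add_eq, add_comm]
      exact this
    have hscal : (p * u x ^ (p - 1)) • gradient u x
        = (2 * β) • (x - xbar) := by
      have h1 : (p * u x ^ (p - 1)) • gradient u x
          = (p / α ^ q) • ((α ^ q * u x ^ (p - 1)) • gradient u x) := by
        rw [smul_smul]
        congr 1
        field_simp
      rw [h1, key, hcx, ← smul_sub, smul_smul]
      have h2 : p / α ^ q * (((n:ℝ) - 2) * α) = -(2 * β) := by
        have hαβ : α ^ q * β = α := by
          rw [hβ, ← Real.rpow_add hα]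
          have h1 : q + (1 - q) = 1 := by ring
          rw [h1, Real.rpow_one]
        have hpn : p * ((n:ℝ) - 2) = -2 := by
          rw [hp]; field_simp; ring
        field_simp
        nlinarith [hαβ, hpn]
      rw [h2, neg_smul, ← smul_neg, neg_sub]
    have hwD' : HasFDerivAt w (toDual ℝ (EuclideanSpace ℝ (Fin n)) ((2 * β) • (x - xbar))) x := by
      rw [← hscal, map_smul] at *
      exact hwD
    -- derivative of the inner product part
    have hid : HasFDerivAt (fun y : EuclideanSpace ℝ (Fin n) => y - xbar) (ContinuousLinearMap.id ℝ (EuclideanSpace ℝ (Fin n))) x := by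
      simpa using (hasFDerivAt_id x).sub_const xbar
    have hinner := (hid.inner ℝ hid).const_mul β
    have hcomb := hwD'.sub hinner
    refine hcomb.congr_fderiv ?_
    ext h
    simp only [ContinuousLinearMap.zero_apply, ContinuousLinearMap.sub_apply,
      ContinuousLinearMap.smul_apply, ContinuousLinearMap.comp_apply,
      ContinuousLinearMap.prod_apply, ContinuousLinearMap.id_apply,
      fderivInnerCLM_apply, toDual_apply_apply, smul_eq_mul]
    rw [real_inner_smul_left, real_inner_comm (x - xbar) h]
    ring
  -- F is constant
  have hconst : ∀ x, F x = F xbar :=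
    fun x => is_const_of_fderiv_eq_zero (fun y => (hFderiv y).differentiableAt)
      (fun y => (hFderiv y).fderiv) x xbar
  -- conclude
  set d : ℝ := u xbar ^ p / β with hd
  have hd0 : 0 < d := div_pos (Real.rpow_pos_of_pos (hpos xbar) p) hβpos
  refine ⟨xbar, d, hd0, fun x => ?_⟩
  have hFx := hconst x
  have hFbar : F xbar = u xbar ^ p := by
    simp [hF, hw]
  have hwx : u x ^ p = β * (d + ‖x - xbar‖ ^ 2) := by
    have h1 : F x = u x ^ p - β * ‖x - xbar‖ ^ 2 := by
      rw [hF]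
      simp only [hw]
      rw [real_inner_self_eq_norm_sq]
    rw [h1, hFbar] at hFx
    rw [hd]
    field_simp
    linarith
  have hden : 0 < d + ‖x - xbar‖ ^ 2 := add_pos_of_pos_of_nonneg hd0 (sq_nonneg _)
  have hβeq : β = (α ^ (2 / ((n:ℝ) - 2)))⁻¹ := by
    rw [hβ, ← Real.rpow_neg hα.le]
    congr 1
    rw [hq]
    field_simp
    ring
  have hbase : α ^ (2 / ((n:ℝ) - 2)) / (d + ‖x - xbar‖ ^ 2) = u x ^ (-p) := by
    rw [Real.rpow_neg (hpos x).le, hwx, hβeq, mul_inv, inv_inv, div_eq_mul_inv]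
  rw [hbase, ← Real.rpow_mul (hpos x).le]
  have hone : -p * (((n:ℝ) - 2) / 2) = 1 := by
    rw [hp]
    field_simp
    ring
  rw [hone, Real.rpow_one]
end

section
/- Let n ≥ 3, u : ℝⁿ → ℝ be C², x ∈ ℝⁿ, and λ > 0. Define w(y) = |y|^{2−n} u_{x,λ}(y/|y|²), where u_{x,λ}(z) = (λ/|z−x|)^{n−2} u(x + λ²(z−x)/|z−x|²). Then w extends to be C¹ near y = 0 with w(0) = λ^{n−2} u(x) and ∇w(0) = (n−2) λ^{n−2} u(x) x + λⁿ ∇u(x). -/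
open Metric

set_option maxHeartbeats 1000000 in
set_option synthInstance.maxHeartbeats 400000 in
open RealInnerProductSpace InnerProductSpace in
private theorem stmt8_aux {n : ℕ} (hn : 3 ≤ n) (u : EuclideanSpace ℝ (Fin n) → ℝ)
    (hu : ContDiff ℝ 2 u) (x : EuclideanSpace ℝ (Fin n)) (l : ℝ) (hl : 0 < l) :
    ∃ ε > (0 : ℝ), ∃ W : EuclideanSpace ℝ (Fin n) → ℝ,
      ContDiffOn ℝ 1 W (ball (0 : EuclideanSpace ℝ (Fin n)) ε) ∧
      (∀ y ∈ ball (0 : EuclideanSpace ℝ (Fin n)) ε \ {0},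
        W y = ‖y‖ ^ ((2 : ℝ) - (n : ℝ)) *
        ((l / ‖(‖y‖ ^ 2)⁻¹ • y - x‖) ^ (n - 2) *
          u (x + (l ^ 2 / ‖(‖y‖ ^ 2)⁻¹ • y - x‖ ^ 2) • ((‖y‖ ^ 2)⁻¹ • y - x)))) ∧
      W 0 = l ^ (n - 2) * u x ∧
      gradient W 0 = (((n : ℝ) - 2) * l ^ (n - 2) * u x) • x + (l ^ n) • gradient u x := by
  classical
  set p : ℝ := -(((n : ℝ) - 2) / 2) with hp
  set D : EuclideanSpace ℝ (Fin n) → ℝ :=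
    fun y => 1 - 2 * ⟪x, y⟫ + ‖x‖ ^ 2 * ‖y‖ ^ 2 with hD
  set g : EuclideanSpace ℝ (Fin n) → EuclideanSpace ℝ (Fin n) :=
    fun y => x + (l ^ 2 * (D y)⁻¹) • (y - (‖y‖ ^ 2 : ℝ) • x) with hg
  set W : EuclideanSpace ℝ (Fin n) → ℝ :=
    fun y => l ^ (n - 2) * (D y ^ p * u (g y)) with hWdef
  have hD0 : D 0 = 1 := by simp [hD]
  have hcast : ((n - 2 : ℕ) : ℝ) = (n : ℝ) - 2 := by
    rw [Nat.cast_sub (by omega)]; norm_num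
  set ε : ℝ := (1 + ‖x‖)⁻¹ with hε
  have hεpos : 0 < ε := by positivity
  have hDpos : ∀ y ∈ ball (0 : EuclideanSpace ℝ (Fin n)) ε, 0 < D y := by
    intro y hy
    rw [mem_ball, dist_zero_right] at hy
    have h1 : ‖y‖ * (1 + ‖x‖) < 1 := by
      rw [← lt_div_iff₀ (by positivity)]
      simpa [one_div] using hy
    have h2 : ⟪x, y⟫ ≤ ‖x‖ * ‖y‖ := real_inner_le_norm x y
    have h3 : (0:ℝ) ≤ ‖x‖ := norm_nonneg x
    have h4 : (0:ℝ) ≤ ‖y‖ := norm_nonneg y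
    have h5 : ‖x‖ * ‖y‖ < 1 := by nlinarith
    simp only [hD]
    nlinarith [sq_nonneg (1 - ‖x‖ * ‖y‖)]
  have hg0 : g 0 = x := by simp [hg]
  have hDcd : ContDiff ℝ ⊤ D := by
    apply ContDiff.add
    · exact contDiff_const.sub (contDiff_const.mul (innerSL ℝ x).contDiff)
    · exact contDiff_const.mul (contDiff_norm_sq ℝ)
  refine ⟨ε, hεpos, W, ?_, ?_, ?_, ?_⟩
  · -- smoothness
    intro y hy
    have hDy := (hDpos y hy).ne'
    apply ContDiffAt.contDiffWithinAt
    apply ContDiffAt.mul contDiffAt_const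
    apply ContDiffAt.mul
    · exact (hDcd.contDiffAt.of_le le_top).rpow_const_of_ne hDy
    · apply ContDiffAt.comp
      · exact (hu.contDiffAt).of_le (by norm_num)
      · apply ContDiffAt.add contDiffAt_const
        apply ContDiffAt.smul (f := fun y => l ^ 2 * (D y)⁻¹) (g := fun y => y - (‖y‖ ^ 2 : ℝ) • x)
        · exact contDiffAt_const.mul ((hDcd.contDiffAt.of_le le_top).inv hDy)
        · exact contDiffAt_id.sub ((contDiff_norm_sq ℝ).contDiffAt.smul contDiffAt_const)
  · -- equality on punctured ball
    intro y hy
    obtain ⟨hyb, hy0⟩ := hy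
    have hy0' : y ≠ 0 := hy0
    have hr : (0:ℝ) < ‖y‖ := norm_pos_iff.mpr hy0'
    have hd : 0 < D y := hDpos y hyb
    set a : EuclideanSpace ℝ (Fin n) := ((‖y‖ : ℝ) ^ 2)⁻¹ • y with ha
    have hkey : ‖a - x‖ ^ 2 = D y / ‖y‖ ^ 2 := by
      rw [@norm_sub_sq_real (EuclideanSpace ℝ (Fin n)) _ _ a x]
      have h1 : ‖a‖ ^ 2 = ((‖y‖ : ℝ) ^ 2)⁻¹ := by
        rw [ha, norm_smul, Real.norm_eq_abs, abs_of_pos (by positivity)]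
        field_simp
      have h2 : ⟪a, x⟫ = ((‖y‖ : ℝ) ^ 2)⁻¹ * ⟪x, y⟫ := by
        rw [ha, real_inner_smul_left, real_inner_comm]
      rw [h1, h2]
      simp only [hD]
      field_simp
    have hdr : (0:ℝ) < ‖a - x‖ ^ 2 := by rw [hkey]; exact div_pos hd (by positivity)
    have hax : (0:ℝ) < ‖a - x‖ := by
      rcases (norm_nonneg (a - x)).lt_or_eq with h | h
      · exact h
      · exfalso; rw [← h] at hdr; simp at hdr
    have hsub : a - x = ((‖y‖ : ℝ) ^ 2)⁻¹ • (y - ((‖y‖ : ℝ) ^ 2) • x) := by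
      rw [smul_sub, smul_smul, inv_mul_cancel₀ (by positivity), one_smul, ha]
    have harg : x + (l ^ 2 / ‖a - x‖ ^ 2) • (a - x) = g y := by
      have hco : l ^ 2 / ‖a - x‖ ^ 2 = l ^ 2 * ‖y‖ ^ 2 * (D y)⁻¹ := by
        rw [hkey]; field_simp
      rw [hco, hsub, smul_smul, hg]
      have hsc : l ^ 2 * ‖y‖ ^ 2 * (D y)⁻¹ * ((‖y‖:ℝ) ^ 2)⁻¹ = l ^ 2 * (D y)⁻¹ := by
        field_simp
      rw [hsc]
    have hnorm : ‖a - x‖ = Real.sqrt (D y) / ‖y‖ := by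
      rw [← Real.sqrt_sq hax.le, hkey, Real.sqrt_div hd.le, Real.sqrt_sq hr.le]
    have hsd : (0:ℝ) < Real.sqrt (D y) := Real.sqrt_pos.mpr hd
    have h1 : (Real.sqrt (D y)) ^ (n - 2) = D y ^ (((n:ℝ) - 2) / 2) := by
      rw [Real.sqrt_eq_rpow, ← Real.rpow_natCast (D y ^ ((1:ℝ)/2)) (n - 2),
        ← Real.rpow_mul hd.le]
      rw [hcast]; ring_nf
    have h2 : (‖y‖ : ℝ) ^ ((2:ℝ) - (n:ℝ)) = ((‖y‖ : ℝ) ^ (n - 2 : ℕ))⁻¹ := by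
      rw [← Real.rpow_natCast ‖y‖ (n - 2), ← Real.rpow_neg hr.le, hcast]
      congr 1; ring
    have h3 : D y ^ p = (D y ^ (((n:ℝ) - 2) / 2))⁻¹ := by
      rw [hp, Real.rpow_neg hd.le]
    have hs : (0:ℝ) < D y ^ (((n:ℝ) - 2) / 2) := Real.rpow_pos_of_pos hd _
    show l ^ (n - 2) * (D y ^ p * u (g y)) = _
    rw [harg, hnorm, h2, h3]
    have h4 : l / (Real.sqrt (D y) / ‖y‖) = l * ‖y‖ / Real.sqrt (D y) := by
      field_simp
    rw [h4, div_pow, mul_pow, h1]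
    field_simp
  · -- value at 0
    simp only [hWdef, hD0, hg0, Real.one_rpow, one_mul]
  · -- gradient at 0
    have hdu : HasFDerivAt u (fderiv ℝ u x) x :=
      ((hu.differentiable (by norm_num)) x).hasFDerivAt
    set LD : EuclideanSpace ℝ (Fin n) →L[ℝ] ℝ :=
      (-2 : ℝ) • (innerSL ℝ x : EuclideanSpace ℝ (Fin n) →L[ℝ] ℝ) with hLD
    have hnsq : HasFDerivAt (fun y : EuclideanSpace ℝ (Fin n) => ‖y‖ ^ 2)
        (2 • (innerSL ℝ (0 : EuclideanSpace ℝ (Fin n))).comp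
          (ContinuousLinearMap.id ℝ (EuclideanSpace ℝ (Fin n)))) 0 :=
      (hasFDerivAt_id (0 : EuclideanSpace ℝ (Fin n))).norm_sq
    have hDd : HasFDerivAt D LD 0 := by
      have h1 : HasFDerivAt (fun y : EuclideanSpace ℝ (Fin n) => ⟪x, y⟫)
          (innerSL ℝ x : EuclideanSpace ℝ (Fin n) →L[ℝ] ℝ) 0 :=
        (innerSL ℝ x : EuclideanSpace ℝ (Fin n) →L[ℝ] ℝ).hasFDerivAt
      have h := ((hasFDerivAt_const (1:ℝ) (0 : EuclideanSpace ℝ (Fin n))).sub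
        (h1.const_mul 2)).add (hnsq.const_mul (‖x‖ ^ 2))
      refine h.congr_fderiv (Eq.symm ?_)
      refine ContinuousLinearMap.ext fun v => ?_
      simp [hLD]
    have hDinv : HasFDerivAt (fun y => (D y)⁻¹) ((-(D 0 ^ 2)⁻¹ : ℝ) • LD) 0 :=
      (hasDerivAt_inv (by rw [hD0]; norm_num)).comp_hasFDerivAt 0 hDd
    have hscal : HasFDerivAt (fun y => l ^ 2 * (D y)⁻¹)
        ((l ^ 2 : ℝ) • ((-(D 0 ^ 2)⁻¹ : ℝ) • LD)) 0 := hDinv.const_mul _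
    have hvec : HasFDerivAt
        (fun y : EuclideanSpace ℝ (Fin n) => y - (‖y‖ ^ 2 : ℝ) • x)
        (ContinuousLinearMap.id ℝ (EuclideanSpace ℝ (Fin n)) -
          (2 • (innerSL ℝ (0 : EuclideanSpace ℝ (Fin n))).comp
            (ContinuousLinearMap.id ℝ (EuclideanSpace ℝ (Fin n)))).smulRight x) 0 :=
      (hasFDerivAt_id 0).sub (hnsq.smul_const x)
    have hgd : HasFDerivAt g
        ((l ^ 2 : ℝ) • ContinuousLinearMap.id ℝ (EuclideanSpace ℝ (Fin n))) 0 := by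
      have h := (hasFDerivAt_const x (0 : EuclideanSpace ℝ (Fin n))).add (hscal.smul hvec)
      refine h.congr_fderiv (Eq.symm ?_)
      refine ContinuousLinearMap.ext fun v => ?_
      simp [hD0]
    have hdu' : HasFDerivAt u (fderiv ℝ u x) (g 0) := by rw [hg0]; exact hdu
    have hcomp : HasFDerivAt (fun y => u (g y))
        ((fderiv ℝ u x).comp
          ((l ^ 2 : ℝ) • ContinuousLinearMap.id ℝ (EuclideanSpace ℝ (Fin n)))) 0 :=
      hdu'.comp 0 hgd
    have hrpow : HasFDerivAt (fun y => D y ^ p) ((p * D 0 ^ (p - 1)) • LD) 0 :=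
      hDd.rpow_const (Or.inl (by rw [hD0]; norm_num))
    have hprod := (hrpow.mul hcomp).const_mul (l ^ (n - 2) : ℝ)
    set G : EuclideanSpace ℝ (Fin n) :=
      (((n : ℝ) - 2) * l ^ (n - 2) * u x) • x + (l ^ n) • gradient u x with hG
    have hinnerG : ∀ v : EuclideanSpace ℝ (Fin n), ⟪gradient u x, v⟫ = fderiv ℝ u x v := by
      intro v
      rw [← toDual_apply_apply]
      show ((toDual ℝ (EuclideanSpace ℝ (Fin n)))
        ((toDual ℝ (EuclideanSpace ℝ (Fin n))).symm (fderiv ℝ u x))) v = _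
      rw [(toDual ℝ (EuclideanSpace ℝ (Fin n))).apply_symm_apply]
    have hln : l ^ n = l ^ (n - 2) * l ^ 2 := by
      rw [← pow_add]; congr 1; omega
    have hWd : HasFDerivAt W (toDual ℝ (EuclideanSpace ℝ (Fin n)) G) 0 := by
      refine hprod.congr_fderiv (Eq.symm ?_)
      refine ContinuousLinearMap.ext fun v => ?_
      rw [toDual_apply_apply, hG, inner_add_left, real_inner_smul_left, real_inner_smul_left,
        hinnerG]
      simp only [ContinuousLinearMap.smul_apply, ContinuousLinearMap.add_apply,
        ContinuousLinearMap.coe_comp', Function.comp_apply,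
        ContinuousLinearMap.coe_id', id_eq, hg0, hD0, hLD, smul_eq_mul,
        Real.one_rpow, one_smul, innerSL_apply_apply, map_smul]
      rw [hln, hp]
      ring_nf
    exact (hasGradientAt_iff_hasFDerivAt.mpr hWd).gradient

/-- The double Kelvin transform `w(y) = |y|^{2-n} u_{x,λ}(y/|y|²)` extends to a
`C¹` function near `y = 0`, with `w(0) = λ^{n-2} u(x)` and
`∇w(0) = (n-2) λ^{n-2} u(x) x + λⁿ ∇u(x)`. -/
theorem stmt8 {n : ℕ} (hn : 3 ≤ n) (u : EuclideanSpace ℝ (Fin n) → ℝ)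
    (hu : ContDiff ℝ 2 u) (x : EuclideanSpace ℝ (Fin n)) (l : ℝ) (hl : 0 < l)
    -- `w y = ‖y‖^{2-n} u_{x,l}(y/‖y‖²)` where
    -- `u_{x,l}(z) = (l/‖z-x‖)^{n-2} u (x + (l²/‖z-x‖²)(z-x))`
    (w : EuclideanSpace ℝ (Fin n) → ℝ)
    (hw : ∀ y : EuclideanSpace ℝ (Fin n), y ≠ 0 →
      w y = ‖y‖ ^ ((2 : ℝ) - (n : ℝ)) *
        ((l / ‖(‖y‖ ^ 2)⁻¹ • y - x‖) ^ (n - 2) *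
          u (x + (l ^ 2 / ‖(‖y‖ ^ 2)⁻¹ • y - x‖ ^ 2) • ((‖y‖ ^ 2)⁻¹ • y - x)))) :
    ∃ ε > (0 : ℝ), ∃ W : EuclideanSpace ℝ (Fin n) → ℝ,
      ContDiffOn ℝ 1 W (ball (0 : EuclideanSpace ℝ (Fin n)) ε) ∧
      (∀ y ∈ ball (0 : EuclideanSpace ℝ (Fin n)) ε \ {0}, W y = w y) ∧
      W 0 = l ^ (n - 2) * u x ∧
      gradient W 0 = (((n : ℝ) - 2) * l ^ (n - 2) * u x) • x + (l ^ n) • gradient u x := by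
  obtain ⟨ε, hε, W, h1, h2, h3, h4⟩ := stmt8_aux hn u hu x l hl
  refine ⟨ε, hε, W, h1, fun y hy => ?_, h3, h4⟩
  have hy0 : y ≠ 0 := by simpa using hy.2
  rw [h2 y hy, hw y hy0]
end
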